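/- For every z ∈ ℂ and every τ in the upper half-plane, θ[1;2/3]²·θ[1;1/3](z,τ)·θ[1;5/3](z,τ) − θ[1;1/3]²·θ[1;2/3](z,τ)·θ[1;4/3](z,τ) + θ[1;0]·θ[1;2/3]·θ[1;1](z,τ)² = 0. -/

import Mathlib

open Complex

/-- Theta function with characteristics `[ε; ε']` of Farkas and Kra. -/
noncomputable def thetaChar (ε ε' : ℝ) (ζ τ : ℂ) : ℂ :=
  ∑' n : ℤ, Complex.exp (2 * (Real.pi : ℂ) * I *
    ((1 / 2) * ((n : ℂ) + (ε : ℂ) / 2) ^ 2 * τ + ((n : ℂ) + (ε : ℂ) / 2) * (ζ + (ε' : ℂ) / 2)))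

namespace ThetaAux1

noncomputable def eC (x : ℂ) : ℂ := Complex.exp (2 * (Real.pi : ℂ) * I * x)

lemma eC_add (x y : ℂ) : eC (x + y) = eC x * eC y := by
  rw [eC, eC, eC, ← Complex.exp_add]; ring_nf

lemma eC_int (n : ℤ) : eC n = 1 := by
  rw [eC, show 2 * (Real.pi : ℂ) * I * n = n * (2 * Real.pi * I) by ring]
  exact Complex.exp_int_mul_two_pi_mul_I n

lemma eC_half : eC (1/2 : ℂ) = -1 := by
  rw [eC, show 2 * (Real.pi : ℂ) * I * (1/2) = Real.pi * I by ring]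
  exact Complex.exp_pi_mul_I

noncomputable def ft (τ w : ℂ) (n : ℤ) : ℂ :=
  eC (((n : ℂ) + 1/2) ^ 2 * τ / 2 + ((n : ℂ) + 1/2) * w)

noncomputable def et (τ w : ℂ) (n : ℤ) : ℂ := eC ((n : ℂ) ^ 2 * τ + (n : ℂ) * w)

noncomputable def ot (τ w : ℂ) (n : ℤ) : ℂ :=
  eC (((n : ℂ) + 1/2) ^ 2 * τ + ((n : ℂ) + 1/2) * w)

noncomputable def Fs (τ w : ℂ) : ℂ := ∑' n : ℤ, ft τ w n
noncomputable def Es (τ w : ℂ) : ℂ := ∑' n : ℤ, et τ w n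
noncomputable def Os (τ w : ℂ) : ℂ := ∑' n : ℤ, ot τ w n

lemma ft_eq (τ w : ℂ) (n : ℤ) :
    ft τ w n = eC (τ/8 + w/2) * jacobiTheta₂_term n (w + τ/2) τ := by
  rw [ft, eC, eC, jacobiTheta₂_term, ← Complex.exp_add]
  congr 1; push_cast; ring

lemma et_eq (τ w : ℂ) (n : ℤ) : et τ w n = jacobiTheta₂_term n w (2 * τ) := by
  rw [et, eC, jacobiTheta₂_term]; congr 1; push_cast; ring

lemma ot_eq (τ w : ℂ) (n : ℤ) :
    ot τ w n = eC (τ/4 + w/2) * jacobiTheta₂_term n (w + τ) (2 * τ) := by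
  rw [ot, eC, eC, jacobiTheta₂_term, ← Complex.exp_add]
  congr 1; push_cast; ring

variable {τ : ℂ} (hτ : 0 < τ.im)

lemma im2τ (hτ : 0 < τ.im) : 0 < (2 * τ).im := by
  simp only [Complex.mul_im, Complex.re_ofNat, Complex.im_ofNat, zero_mul, add_zero]
  linarith

lemma summable_ft (hτ : 0 < τ.im) (w : ℂ) : Summable fun n => ‖ft τ w n‖ := by
  simp only [ft_eq]
  exact summable_norm_iff.mpr
    (((summable_jacobiTheta₂_term_iff (w + τ/2) τ).mpr hτ).mul_left _)

lemma summable_et (hτ : 0 < τ.im) (w : ℂ) : Summable fun n => ‖et τ w n‖ := by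
  simp only [et_eq]
  exact summable_norm_iff.mpr ((summable_jacobiTheta₂_term_iff w (2*τ)).mpr (im2τ hτ))

lemma summable_ot (hτ : 0 < τ.im) (w : ℂ) : Summable fun n => ‖ot τ w n‖ := by
  simp only [ot_eq]
  exact summable_norm_iff.mpr
    (((summable_jacobiTheta₂_term_iff (w + τ) (2*τ)).mpr (im2τ hτ)).mul_left _)

/-- The key addition decomposition. -/
lemma F_mul_F (hτ : 0 < τ.im) (x y : ℂ) :
    Fs τ x * Fs τ y = Es τ (x+y) * Os τ (x-y) + Os τ (x+y) * Es τ (x-y) := by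
  classical
  have hfx := summable_ft hτ x
  have hfy := summable_ft hτ y
  have h1 : Fs τ x * Fs τ y = ∑' p : ℤ × ℤ, ft τ x p.1 * ft τ y p.2 :=
    tsum_mul_tsum_of_summable_norm hfx hfy
  set G : ℤ × ℤ → ℂ := fun p => ft τ x p.1 * ft τ y p.2 with hGdef
  have hGsum : Summable G := summable_mul_of_summable_norm hfx hfy
  set ψ₁ : ℤ × ℤ → ℤ × ℤ := fun q => (q.1 + q.2, q.1 - q.2 - 1) with hψ₁
  set ψ₂ : ℤ × ℤ → ℤ × ℤ := fun q => (q.1 + q.2, q.1 - q.2) with hψ₂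
  have hinj₁ : Function.Injective ψ₁ := by
    intro a b h
    simp only [hψ₁, Prod.mk.injEq] at h
    obtain ⟨h1', h2'⟩ := h
    exact Prod.ext (by omega) (by omega)
  have hinj₂ : Function.Injective ψ₂ := by
    intro a b h
    simp only [hψ₂, Prod.mk.injEq] at h
    obtain ⟨h1', h2'⟩ := h
    exact Prod.ext (by omega) (by omega)
  have hr₁ : Set.range ψ₁ = {p : ℤ × ℤ | (p.1 + p.2) % 2 = 1} := by
    ext p
    constructor
    · rintro ⟨q, rfl⟩; simp only [hψ₁, Set.mem_setOf_eq]; omega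
    · intro hp
      simp only [Set.mem_setOf_eq] at hp
      exact ⟨((p.1 + p.2 + 1)/2, (p.1 - p.2 - 1)/2),
        Prod.ext (by simp only [hψ₁]; omega) (by simp only [hψ₁]; omega)⟩
  have hr₂ : Set.range ψ₂ = {p : ℤ × ℤ | (p.1 + p.2) % 2 = 0} := by
    ext p
    constructor
    · rintro ⟨q, rfl⟩; simp only [hψ₂, Set.mem_setOf_eq]; omega
    · intro hp
      simp only [Set.mem_setOf_eq] at hp
      exact ⟨((p.1 + p.2)/2, (p.1 - p.2)/2),
        Prod.ext (by simp only [hψ₂]; omega) (by simp only [hψ₂]; omega)⟩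
  have hrange : Set.range ψ₂ = (Set.range ψ₁)ᶜ := by
    rw [hr₁, hr₂]
    ext p
    simp only [Set.mem_setOf_eq, Set.mem_compl_iff]
    omega
  have hcomp₁ : ∀ q : ℤ × ℤ, G (ψ₁ q) = et τ (x+y) q.1 * ot τ (x-y) q.2 := by
    rintro ⟨u, v⟩
    simp only [hGdef, hψ₁, ft, et, ot, eC]
    rw [← Complex.exp_add, ← Complex.exp_add]
    congr 1; push_cast; ring
  have hcomp₂ : ∀ q : ℤ × ℤ, G (ψ₂ q) = ot τ (x+y) q.1 * et τ (x-y) q.2 := by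
    rintro ⟨u, v⟩
    simp only [hGdef, hψ₂, ft, et, ot, eC]
    rw [← Complex.exp_add, ← Complex.exp_add]
    congr 1; push_cast; ring
  have hA : HasSum (fun q : ℤ × ℤ => et τ (x+y) q.1 * ot τ (x-y) q.2)
      (Es τ (x+y) * Os τ (x-y)) := by
    have hs := summable_mul_of_summable_norm (summable_et hτ (x+y)) (summable_ot hτ (x-y))
    have h2 := hs.hasSum
    rwa [← tsum_mul_tsum_of_summable_norm (summable_et hτ (x+y)) (summable_ot hτ (x-y))] at h2
  have hB : HasSum (fun q : ℤ × ℤ => ot τ (x+y) q.1 * et τ (x-y) q.2)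
      (Os τ (x+y) * Es τ (x-y)) := by
    have hs := summable_mul_of_summable_norm (summable_ot hτ (x+y)) (summable_et hτ (x-y))
    have h2 := hs.hasSum
    rwa [← tsum_mul_tsum_of_summable_norm (summable_ot hτ (x+y)) (summable_et hτ (x-y))] at h2
  have hA' : HasSum (G ∘ ψ₁) (Es τ (x+y) * Os τ (x-y)) := by
    have : (G ∘ ψ₁) = fun q : ℤ × ℤ => et τ (x+y) q.1 * ot τ (x-y) q.2 :=
      funext fun q => hcomp₁ q
    rw [this]; exact hA
  have hB' : HasSum (G ∘ ψ₂) (Os τ (x+y) * Es τ (x-y)) := by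
    have : (G ∘ ψ₂) = fun q : ℤ × ℤ => ot τ (x+y) q.1 * et τ (x-y) q.2 :=
      funext fun q => hcomp₂ q
    rw [this]; exact hB
  have H₁ : HasSum (G ∘ ((↑) : Set.range ψ₁ → ℤ × ℤ)) (Es τ (x+y) * Os τ (x-y)) :=
    hinj₁.hasSum_range_iff.mpr hA'
  have H₂ : HasSum (G ∘ ((↑) : Set.range ψ₂ → ℤ × ℤ)) (Os τ (x+y) * Es τ (x-y)) :=
    hinj₂.hasSum_range_iff.mpr hB'
  rw [hrange] at H₂
  have Hfull : HasSum G (Es τ (x+y) * Os τ (x-y) + Os τ (x+y) * Es τ (x-y)) :=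
    H₁.add_compl H₂
  rw [h1]
  exact Hfull.tsum_eq

/-! Symmetry lemmas. -/

lemma Es_neg (w : ℂ) : Es τ (-w) = Es τ w := by
  have h : ∀ n : ℤ, et τ (-w) n = et τ w (-n) := by
    intro n; rw [et, et]; congr 1; push_cast; ring
  calc Es τ (-w) = ∑' n : ℤ, et τ w (-n) := tsum_congr h
    _ = Es τ w := by
        have := (Equiv.neg ℤ).tsum_eq (et τ w)
        simpa only [Equiv.neg_apply, Es] using this

lemma Es_m23 : Es τ (-(2/3)) = Es τ (1/3) := by
  refine tsum_congr fun n => ?_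
  rw [et, show (n:ℂ)^2*τ + (n:ℂ) * (-(2/3)) = ((n:ℂ)^2*τ + (n:ℂ) * (1/3)) + ((-n : ℤ) : ℂ) by
    push_cast; ring, eC_add, eC_int, mul_one, et]

lemma Es_23 : Es τ (2/3) = Es τ (1/3) := by
  rw [show (2/3 : ℂ) = -(-(2/3)) by norm_num, Es_neg, Es_m23]

lemma Es_m13 : Es τ (-(1/3)) = Es τ (1/3) := by
  rw [Es_neg]

lemma Os_m13 : Os τ (-(1/3)) = Os τ (1/3) := by
  have h : ∀ n : ℤ, ot τ (-(1/3)) ((Equiv.subLeft (-1 : ℤ)) n) = ot τ (1/3) n := by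
    intro n
    simp only [Equiv.subLeft_apply, ot]
    congr 1; push_cast; ring
  calc Os τ (-(1/3)) = ∑' n : ℤ, ot τ (-(1/3)) ((Equiv.subLeft (-1 : ℤ)) n) :=
        ((Equiv.subLeft (-1 : ℤ)).tsum_eq (ot τ (-(1/3)))).symm
    _ = ∑' n : ℤ, ot τ (1/3) n := tsum_congr h
    _ = Os τ (1/3) := rfl

lemma Os_m23 : Os τ (-(2/3)) = -Os τ (1/3) := by
  have h : ∀ n : ℤ, ot τ (-(2/3)) n = -ot τ (1/3) n := by
    intro n
    rw [ot, show ((n:ℂ)+1/2)^2*τ + ((n:ℂ)+1/2) * (-(2/3))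
        = ((((n:ℂ)+1/2)^2*τ + ((n:ℂ)+1/2) * (1/3)) + ((-(n+1) : ℤ) : ℂ)) + (1/2 : ℂ) by
      push_cast; ring, eC_add, eC_add, eC_int, eC_half, mul_one, ot]
    ring
  rw [Os, tsum_congr h, tsum_neg, Os]

lemma Os_23 : Os τ (2/3) = -Os τ (1/3) := by
  have h : ∀ n : ℤ, ot τ (2/3) n = -ot τ (-(1/3)) n := by
    intro n
    rw [ot, show ((n:ℂ)+1/2)^2*τ + ((n:ℂ)+1/2) * (2/3)
        = ((((n:ℂ)+1/2)^2*τ + ((n:ℂ)+1/2) * (-(1/3))) + ((n : ℤ) : ℂ)) + (1/2 : ℂ) by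
      push_cast; ring, eC_add, eC_add, eC_int, eC_half, mul_one, ot]
    ring
  rw [Os, tsum_congr h, tsum_neg, ← Os, Os_m13]

lemma thetaChar_eq (ε' : ℝ) (ζ τ : ℂ) : thetaChar 1 ε' ζ τ = Fs τ (ζ + (ε' : ℂ)/2) := by
  refine tsum_congr fun n => ?_
  rw [ft, eC]
  congr 1; push_cast; ring

end ThetaAux1

open ThetaAux1 in
theorem stmt_1 (z τ : ℂ) (hτ : 0 < τ.im) :
    thetaChar 1 (2/3) 0 τ ^ 2 * thetaChar 1 (1/3) z τ * thetaChar 1 (5/3) z τ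
      - thetaChar 1 (1/3) 0 τ ^ 2 * thetaChar 1 (2/3) z τ * thetaChar 1 (4/3) z τ
      + thetaChar 1 0 0 τ * thetaChar 1 (2/3) 0 τ * thetaChar 1 1 z τ ^ 2 = 0 := by
  have t1 : thetaChar 1 (2/3) 0 τ = Fs τ (1/3) := by
    rw [thetaChar_eq]; congr 1; all_goals (push_cast; ring)
  have t2 : thetaChar 1 (1/3) z τ = Fs τ (z + 1/6) := by
    rw [thetaChar_eq]; congr 1; all_goals (push_cast; ring)
  have t3 : thetaChar 1 (5/3) z τ = Fs τ (z + 5/6) := by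
    rw [thetaChar_eq]; congr 1; all_goals (push_cast; ring)
  have t4 : thetaChar 1 (1/3) 0 τ = Fs τ (1/6) := by
    rw [thetaChar_eq]; congr 1; all_goals (push_cast; ring)
  have t5 : thetaChar 1 (2/3) z τ = Fs τ (z + 1/3) := by
    rw [thetaChar_eq]; congr 1; all_goals (push_cast; ring)
  have t6 : thetaChar 1 (4/3) z τ = Fs τ (z + 2/3) := by
    rw [thetaChar_eq]; congr 1; all_goals (push_cast; ring)
  have t7 : thetaChar 1 0 0 τ = Fs τ 0 := by
    rw [thetaChar_eq]; congr 1; all_goals (push_cast; ring)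
  have t8 : thetaChar 1 1 z τ = Fs τ (z + 1/2) := by
    rw [thetaChar_eq]; congr 1; all_goals (push_cast; ring)
  rw [t1, t2, t3, t4, t5, t6, t7, t8]
  have P1 : Fs τ (1/3) * Fs τ (1/3) = Es τ (2/3) * Os τ 0 + Os τ (2/3) * Es τ 0 := by
    have h := F_mul_F hτ (1/3 : ℂ) (1/3 : ℂ)
    rw [show (1/3 : ℂ) + 1/3 = 2/3 by norm_num, show (1/3 : ℂ) - 1/3 = 0 by norm_num] at h
    exact h
  have P2 : Fs τ (z + 1/6) * Fs τ (z + 5/6)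
      = Es τ (2*z+1) * Os τ (-(2/3)) + Os τ (2*z+1) * Es τ (-(2/3)) := by
    have h := F_mul_F hτ (z + 1/6) (z + 5/6)
    rw [show (z + 1/6) + (z + 5/6) = 2*z+1 by ring,
        show (z + 1/6) - (z + 5/6) = -(2/3) by ring] at h
    exact h
  have P3 : Fs τ (1/6) * Fs τ (1/6) = Es τ (1/3) * Os τ 0 + Os τ (1/3) * Es τ 0 := by
    have h := F_mul_F hτ (1/6 : ℂ) (1/6 : ℂ)
    rw [show (1/6 : ℂ) + 1/6 = 1/3 by norm_num, show (1/6 : ℂ) - 1/6 = 0 by norm_num] at h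
    exact h
  have P4 : Fs τ (z + 1/3) * Fs τ (z + 2/3)
      = Es τ (2*z+1) * Os τ (-(1/3)) + Os τ (2*z+1) * Es τ (-(1/3)) := by
    have h := F_mul_F hτ (z + 1/3) (z + 2/3)
    rw [show (z + 1/3) + (z + 2/3) = 2*z+1 by ring,
        show (z + 1/3) - (z + 2/3) = -(1/3) by ring] at h
    exact h
  have P5 : Fs τ 0 * Fs τ (1/3) = Es τ (1/3) * Os τ (-(1/3)) + Os τ (1/3) * Es τ (-(1/3)) := by
    have h := F_mul_F hτ (0 : ℂ) (1/3 : ℂ)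
    rw [show (0 : ℂ) + 1/3 = 1/3 by norm_num, show (0 : ℂ) - 1/3 = -(1/3) by norm_num] at h
    exact h
  have P6 : Fs τ (z + 1/2) * Fs τ (z + 1/2)
      = Es τ (2*z+1) * Os τ 0 + Os τ (2*z+1) * Es τ 0 := by
    have h := F_mul_F hτ (z + 1/2) (z + 1/2)
    rw [show (z + 1/2) + (z + 1/2) = 2*z+1 by ring,
        show (z + 1/2) - (z + 1/2) = 0 by ring] at h
    exact h
  rw [Es_23, Os_23] at P1
  rw [Es_m23, Os_m23] at P2
  rw [Es_m13, Os_m13] at P4 P5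
  set a := Es τ 0
  set b := Os τ 0
  set p := Es τ (1/3)
  set r := Os τ (1/3)
  set X := Es τ (2*z+1)
  set Y := Os τ (2*z+1)
  linear_combination (Fs τ (z + 1/6) * Fs τ (z + 5/6)) * P1
    + (p * b + (-r) * a) * P2
    - (Fs τ (z + 1/3) * Fs τ (z + 2/3)) * P3
    - (p * b + r * a) * P4
    + (Fs τ (z + 1/2) * Fs τ (z + 1/2)) * P5
    + (p * r + r * p) * P6
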